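/- Let T > 0, β > 0 and α ≥ β/T, and let u(t) = e^{−αt} − e^{−α(T−t)} be the antisymmetric mode. Then ∫₀^T u′(t)² dt ≤ α² · (sinh β + β)/(sinh β − β) · ∫₀^T u(t)² dt, where u′ denotes the derivative of u. -/

import Mathlib

open Real

lemma sinh_convex : ConvexOn ℝ (Set.Ici (0:ℝ)) Real.sinh := by
  apply convexOn_of_deriv2_nonneg (convex_Ici 0) Real.continuous_sinh.continuousOn
    Real.differentiable_sinh.differentiableOn
  · simp only [Real.deriv_sinh]
    exact Real.differentiable_cosh.differentiableOn
  · intro x hx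
    rw [interior_Ici, Set.mem_Ioi] at hx
    simp only [Function.iterate_succ, Function.iterate_zero, Function.comp_apply, id,
      Real.deriv_sinh, Real.deriv_cosh]
    exact (Real.sinh_pos_iff.2 hx).le

lemma key_sinh (b s : ℝ) (hb : 0 < b) (hbs : b ≤ s) : s * Real.sinh b ≤ b * Real.sinh s := by
  have hs : 0 < s := hb.trans_le hbs
  have ha1 : (0:ℝ) ≤ 1 - b/s := by
    have : b / s ≤ 1 := (div_le_one hs).2 hbs
    linarith
  have ha2 : (0:ℝ) ≤ b/s := by positivity
  have h := sinh_convex.2 (Set.mem_Ici.2 (le_refl (0:ℝ))) (Set.mem_Ici.2 hs.le) ha1 ha2 (by ring)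
  simp only [smul_eq_mul, mul_zero, zero_add, Real.sinh_zero] at h
  rw [div_mul_cancel₀ b hs.ne'] at h
  calc s * Real.sinh b ≤ s * (b/s * Real.sinh s) :=
        mul_le_mul_of_nonneg_left h hs.le
    _ = b * Real.sinh s := by field_simp

set_option maxHeartbeats 1000000 in
theorem antisymmetric_mode_energy_bound (T β α : ℝ) (hT : 0 < T) (hβ : 0 < β)
    (hα : β / T ≤ α)
    (u : ℝ → ℝ) (hu : u = fun t => Real.exp (-α*t) - Real.exp (-α*(T-t))) :
    ∫ t in (0:ℝ)..T, (deriv u t)^2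
      ≤ α^2 * ((Real.sinh β + β) / (Real.sinh β - β))
        * ∫ t in (0:ℝ)..T, (u t)^2 := by
  have hα0 : 0 < α := lt_of_lt_of_le (div_pos hβ hT) hα
  have hβT : β ≤ α * T := (div_le_iff₀ hT).1 hα
  -- derivative of u
  have hd : ∀ t : ℝ, HasDerivAt u (-α * Real.exp (-α*t) - α * Real.exp (-α*(T-t))) t := by
    intro t
    rw [hu]
    have h1 : HasDerivAt (fun t : ℝ => Real.exp (-α*t)) (Real.exp (-α*t) * (-α)) t := by
      simpa using ((hasDerivAt_id t).const_mul (-α)).exp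
    have h2 : HasDerivAt (fun t : ℝ => Real.exp (-α*(T-t))) (Real.exp (-α*(T-t)) * α) t := by
      have h : HasDerivAt (fun t : ℝ => -α*(T-t)) α t := by
        simpa using (((hasDerivAt_id t).const_sub T).const_mul (-α))
      exact h.exp
    refine (h1.sub h2).congr_deriv ?_
    ring
  have hderiv : deriv u = fun t => -α * Real.exp (-α*t) - α * Real.exp (-α*(T-t)) :=
    funext fun t => (hd t).deriv
  -- exp identities
  have hmul : ∀ t : ℝ, Real.exp (-α*t) * Real.exp (-α*(T-t)) = Real.exp (-α*T) := by
    intro t; rw [← Real.exp_add]; ring_nf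
  have hsq1 : ∀ t : ℝ, Real.exp (-α*t) * Real.exp (-α*t) = Real.exp (-(2*α)*t) := by
    intro t; rw [← Real.exp_add]; ring_nf
  have hsq2 : ∀ t : ℝ, Real.exp (-α*(T-t)) * Real.exp (-α*(T-t)) = Real.exp (-(2*α)*(T-t)) := by
    intro t; rw [← Real.exp_add]; ring_nf
  -- shared derivative building blocks
  have e1 : ∀ t : ℝ, HasDerivAt (fun t : ℝ => Real.exp (-(2*α)*t))
      (Real.exp (-(2*α)*t) * (-(2*α))) t := by
    intro t; simpa using ((hasDerivAt_id t).const_mul (-(2*α))).exp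
  have e2 : ∀ t : ℝ, HasDerivAt (fun t : ℝ => Real.exp (-(2*α)*(T-t)))
      (Real.exp (-(2*α)*(T-t)) * (2*α)) t := by
    intro t
    have h : HasDerivAt (fun t : ℝ => -(2*α)*(T-t)) (2*α) t := by
      simpa using (((hasDerivAt_id t).const_sub T).const_mul (-(2*α)))
    exact h.exp
  have e3 : ∀ t : ℝ, HasDerivAt (fun t : ℝ => 2*Real.exp (-α*T)*t) (2*Real.exp (-α*T)) t := by
    intro t; simpa using (hasDerivAt_id t).const_mul (2*Real.exp (-α*T))
  have I1 : ∫ t in (0:ℝ)..T, (deriv u t)^2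
      = α*(1 - Real.exp (-(2*α)*T)) + 2*α^2*T*Real.exp (-α*T) := by
    rw [hderiv]
    have hF : ∀ t : ℝ, HasDerivAt
        (fun t => α^2 * (-(Real.exp (-(2*α)*t))/(2*α) + 2*Real.exp (-α*T)*t
          + Real.exp (-(2*α)*(T-t))/(2*α)))
        ((-α * Real.exp (-α*t) - α * Real.exp (-α*(T-t)))^2) t := by
      intro t
      have h := ((((e1 t).neg.div_const (2*α)).add (e3 t)).add
        ((e2 t).div_const (2*α))).const_mul (α^2)
      refine h.congr_deriv ?_
      rw [← hsq1 t, ← hsq2 t, ← hmul t]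
      field_simp
      ring
    rw [intervalIntegral.integral_eq_sub_of_hasDerivAt (fun t _ => hF t)
      (by apply Continuous.intervalIntegrable; fun_prop)]
    have h0 : Real.exp (-(2*α)*0) = 1 := by norm_num
    have hTT : Real.exp (-(2*α)*(T-T)) = 1 := by norm_num
    rw [h0, hTT]
    field_simp
    ring
  have I2 : ∫ t in (0:ℝ)..T, (u t)^2
      = (1 - Real.exp (-(2*α)*T))/α - 2*T*Real.exp (-α*T) := by
    rw [hu]
    have hF : ∀ t : ℝ, HasDerivAt
        (fun t => -(Real.exp (-(2*α)*t))/(2*α) - 2*Real.exp (-α*T)*t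
          + Real.exp (-(2*α)*(T-t))/(2*α))
        ((Real.exp (-α*t) - Real.exp (-α*(T-t)))^2) t := by
      intro t
      have h := (((e1 t).neg.div_const (2*α)).sub (e3 t)).add ((e2 t).div_const (2*α))
      refine h.congr_deriv ?_
      rw [← hsq1 t, ← hsq2 t, ← hmul t]
      field_simp
      ring
    rw [intervalIntegral.integral_eq_sub_of_hasDerivAt (fun t _ => hF t)
      (by apply Continuous.intervalIntegrable; fun_prop)]
    have h0 : Real.exp (-(2*α)*0) = 1 := by norm_num
    have hTT : Real.exp (-(2*α)*(T-T)) = 1 := by norm_num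
    rw [h0, hTT]
    field_simp
    ring
  rw [I1, I2]
  -- express in terms of y = exp(α T)
  have hy : 0 < Real.exp (α*T) := Real.exp_pos _
  have hE1 : Real.exp (-α*T) = (Real.exp (α*T))⁻¹ := by
    rw [← Real.exp_neg]; ring_nf
  have hE2 : Real.exp (-(2*α)*T) = (Real.exp (α*T))⁻¹ * (Real.exp (α*T))⁻¹ := by
    rw [← Real.exp_neg, ← Real.exp_add]; congr 1; ring
  have hS : Real.sinh (α*T) = (Real.exp (α*T) - (Real.exp (α*T))⁻¹)/2 := by
    rw [Real.sinh_eq, Real.exp_neg]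
  set y := Real.exp (α*T) with hydef
  have hg1 : α*(1 - Real.exp (-(2*α)*T)) + 2*α^2*T*Real.exp (-α*T)
      = α * y⁻¹ * (2 * Real.sinh (α*T) + 2 * (α*T)) := by
    rw [hE1, hE2, hS]; field_simp
  have hg2 : (1 - Real.exp (-(2*α)*T))/α - 2*T*Real.exp (-α*T)
      = (y⁻¹ / α) * (2 * Real.sinh (α*T) - 2 * (α*T)) := by
    rw [hE1, hE2, hS]; field_simp
  rw [hg1, hg2]
  -- final algebraic inequality
  have hkey : (α*T) * Real.sinh β ≤ β * Real.sinh (α*T) := key_sinh β (α*T) hβ hβT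
  have hden : 0 < Real.sinh β - β := by
    have := Real.self_lt_sinh_iff.2 hβ
    linarith
  have hfin : (2 * Real.sinh (α*T) + 2 * (α*T)) * (Real.sinh β - β)
      ≤ (Real.sinh β + β) * (2 * Real.sinh (α*T) - 2 * (α*T)) := by nlinarith [hkey]
  have hy' : 0 < y⁻¹ := by positivity
  have hA : α^2 * ((Real.sinh β + β) / (Real.sinh β - β))
        * ((y⁻¹ / α) * (2 * Real.sinh (α*T) - 2 * (α*T)))
      = α * y⁻¹ * ((Real.sinh β + β) * (2 * Real.sinh (α*T) - 2 * (α*T))) / (Real.sinh β - β) := by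
    field_simp
  rw [hA, le_div_iff₀ hden]
  calc α * y⁻¹ * (2 * Real.sinh (α*T) + 2 * (α*T)) * (Real.sinh β - β)
      = (α * y⁻¹) * ((2 * Real.sinh (α*T) + 2 * (α*T)) * (Real.sinh β - β)) := by ring
    _ ≤ (α * y⁻¹) * ((Real.sinh β + β) * (2 * Real.sinh (α*T) - 2 * (α*T))) :=
        mul_le_mul_of_nonneg_left hfin (by positivity)
    _ = α * y⁻¹ * ((Real.sinh β + β) * (2 * Real.sinh (α*T) - 2 * (α*T))) := by ring
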